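/- In the polynomial ring ℚ[x₁, x₂, x₃], let h_j denote the complete homogeneous symmetric polynomial of degree j in x₁, x₂, x₃, and let P₉ be the degree-9 homogeneous component of the polynomial (1 + x₁ + x₂ + x₃) · (1+3x₁)(1+3x₂)(1+3x₃) · ∏_{i≠j} (1 + 2x_i + x_j), where the last product runs over the six ordered pairs (i,j) with i ≠ j, i,j ∈ {1,2,3}. Then P₉ − 3402·(x₁x₂x₃)³ lies in the ideal of ℚ[x₁, x₂, x₃] generated by h₄, h₅, h₆. -/

import Mathlib

open Finset MvPolynomial

set_option maxHeartbeats 1000000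

noncomputable section

/-- The complete homogeneous symmetric polynomial of degree `j` in `x₁, x₂, x₃`. -/
def hsym (j : ℕ) : MvPolynomial (Fin 3) ℚ :=
  ∑ a ∈ Finset.range (j + 1), ∑ b ∈ Finset.range (j + 1 - a),
    X 0 ^ a * X 1 ^ b * X 2 ^ (j - a - b)

/-- The product `(1 + x₁ + x₂ + x₃)·(1+3x₁)(1+3x₂)(1+3x₃)·∏_{i≠j}(1 + 2x_i + x_j)`,
the total Chern class of `Sym³S*` times the relevant factors. -/
def Qprod : MvPolynomial (Fin 3) ℚ :=
  (1 + X 0 + X 1 + X 2) * ((1 + 3 * X 0) * (1 + 3 * X 1) * (1 + 3 * X 2)) *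
    ∏ p ∈ Finset.univ.filter (fun p : Fin 3 × Fin 3 => p.1 ≠ p.2),
      (1 + 2 * X p.1 + X p.2)

/-- The degree-9 homogeneous component of `Qprod`. -/
def P9 : MvPolynomial (Fin 3) ℚ := MvPolynomial.homogeneousComponent 9 Qprod

private def E1 : MvPolynomial (Fin 3) ℚ := X 0 + X 1 + X 2
private def E2 : MvPolynomial (Fin 3) ℚ := X 0 * X 1 + X 0 * X 2 + X 1 * X 2
private def E3 : MvPolynomial (Fin 3) ℚ := X 0 * X 1 * X 2

private lemma hE1 : E1.IsHomogeneous 1 :=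
  ((isHomogeneous_X ℚ 0).add (isHomogeneous_X ℚ 1)).add (isHomogeneous_X ℚ 2)
private lemma hE2 : E2.IsHomogeneous 2 :=
  (((isHomogeneous_X ℚ 0).mul (isHomogeneous_X ℚ 1)).add
    ((isHomogeneous_X ℚ 0).mul (isHomogeneous_X ℚ 2))).add
    ((isHomogeneous_X ℚ 1).mul (isHomogeneous_X ℚ 2))
private lemma hE3 : E3.IsHomogeneous 3 :=
  ((isHomogeneous_X ℚ 0).mul (isHomogeneous_X ℚ 1)).mul (isHomogeneous_X ℚ 2)

private lemma monoE (r : ℚ) (a b c n : ℕ) (h : 1 * a + (2 * b + 3 * c) = n) :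
    (C r * E1 ^ a * E2 ^ b * E3 ^ c).IsHomogeneous n := by
  subst h
  have := ((isHomogeneous_C (Fin 3) r).mul (hE1.pow a)).mul ((hE2.pow b).mul (hE3.pow c))
  simpa [mul_assoc, add_assoc] using this

private def QQ0 : MvPolynomial (Fin 3) ℚ :=
    C (1 : ℚ) * E1 ^ 0 * E2 ^ 0 * E3 ^ 0

private lemma hQQ0 : (QQ0).IsHomogeneous 0 := (monoE _ 0 0 0 0 (by norm_num))

private def QQ1 : MvPolynomial (Fin 3) ℚ :=
    C (10 : ℚ) * E1 ^ 1 * E2 ^ 0 * E3 ^ 0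

private lemma hQQ1 : (QQ1).IsHomogeneous 1 := (monoE _ 1 0 0 1 (by norm_num))

private def QQ2 : MvPolynomial (Fin 3) ℚ :=
    C (40 : ℚ) * E1 ^ 2 * E2 ^ 0 * E3 ^ 0 +
    C (15 : ℚ) * E1 ^ 0 * E2 ^ 1 * E3 ^ 0

private lemma hQQ2 : (QQ2).IsHomogeneous 2 := ((monoE _ 2 0 0 2 (by norm_num)).add (monoE _ 0 1 0 2 (by norm_num)))

private def QQ3 : MvPolynomial (Fin 3) ℚ :=
    C (82 : ℚ) * E1 ^ 3 * E2 ^ 0 * E3 ^ 0 +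
    C (111 : ℚ) * E1 ^ 1 * E2 ^ 1 * E3 ^ 0 +
    C (27 : ℚ) * E1 ^ 0 * E2 ^ 0 * E3 ^ 1

private lemma hQQ3 : (QQ3).IsHomogeneous 3 := (((monoE _ 3 0 0 3 (by norm_num)).add (monoE _ 1 1 0 3 (by norm_num))).add (monoE _ 0 0 1 3 (by norm_num)))

private def QQ4 : MvPolynomial (Fin 3) ℚ :=
    C (91 : ℚ) * E1 ^ 4 * E2 ^ 0 * E3 ^ 0 +
    C (315 : ℚ) * E1 ^ 2 * E2 ^ 1 * E3 ^ 0 +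
    C (189 : ℚ) * E1 ^ 1 * E2 ^ 0 * E3 ^ 1 +
    C (63 : ℚ) * E1 ^ 0 * E2 ^ 2 * E3 ^ 0

private lemma hQQ4 : (QQ4).IsHomogeneous 4 := ((((monoE _ 4 0 0 4 (by norm_num)).add (monoE _ 2 1 0 4 (by norm_num))).add (monoE _ 1 0 1 4 (by norm_num))).add (monoE _ 0 2 0 4 (by norm_num)))

private def QQ5 : MvPolynomial (Fin 3) ℚ :=
    C (52 : ℚ) * E1 ^ 5 * E2 ^ 0 * E3 ^ 0 +
    C (429 : ℚ) * E1 ^ 3 * E2 ^ 1 * E3 ^ 0 +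
    C (513 : ℚ) * E1 ^ 2 * E2 ^ 0 * E3 ^ 1 +
    C (324 : ℚ) * E1 ^ 1 * E2 ^ 2 * E3 ^ 0 +
    C (162 : ℚ) * E1 ^ 0 * E2 ^ 1 * E3 ^ 1

private lemma hQQ5 : (QQ5).IsHomogeneous 5 := (((((monoE _ 5 0 0 5 (by norm_num)).add (monoE _ 3 1 0 5 (by norm_num))).add (monoE _ 2 0 1 5 (by norm_num))).add (monoE _ 1 2 0 5 (by norm_num))).add (monoE _ 0 1 1 5 (by norm_num)))

private def QQ6 : MvPolynomial (Fin 3) ℚ :=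
    C (12 : ℚ) * E1 ^ 6 * E2 ^ 0 * E3 ^ 0 +
    C (282 : ℚ) * E1 ^ 4 * E2 ^ 1 * E3 ^ 0 +
    C (679 : ℚ) * E1 ^ 3 * E2 ^ 0 * E3 ^ 1 +
    C (593 : ℚ) * E1 ^ 2 * E2 ^ 2 * E3 ^ 0 +
    C (792 : ℚ) * E1 ^ 1 * E2 ^ 1 * E3 ^ 1 +
    C (85 : ℚ) * E1 ^ 0 * E2 ^ 3 * E3 ^ 0 +
    C (27 : ℚ) * E1 ^ 0 * E2 ^ 0 * E3 ^ 2

private lemma hQQ6 : (QQ6).IsHomogeneous 6 := (((((((monoE _ 6 0 0 6 (by norm_num)).add (monoE _ 4 1 0 6 (by norm_num))).add (monoE _ 3 0 1 6 (by norm_num))).add (monoE _ 2 2 0 6 (by norm_num))).add (monoE _ 1 1 1 6 (by norm_num))).add (monoE _ 0 3 0 6 (by norm_num))).add (monoE _ 0 0 2 6 (by norm_num)))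

private def QQ7 : MvPolynomial (Fin 3) ℚ :=
    C (72 : ℚ) * E1 ^ 5 * E2 ^ 1 * E3 ^ 0 +
    C (448 : ℚ) * E1 ^ 4 * E2 ^ 0 * E3 ^ 1 +
    C (464 : ℚ) * E1 ^ 3 * E2 ^ 2 * E3 ^ 0 +
    C (1386 : ℚ) * E1 ^ 2 * E2 ^ 1 * E3 ^ 1 +
    C (259 : ℚ) * E1 ^ 1 * E2 ^ 3 * E3 ^ 0 +
    C (108 : ℚ) * E1 ^ 1 * E2 ^ 0 * E3 ^ 2 +
    C (243 : ℚ) * E1 ^ 0 * E2 ^ 2 * E3 ^ 1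

private lemma hQQ7 : (QQ7).IsHomogeneous 7 := (((((((monoE _ 5 1 0 7 (by norm_num)).add (monoE _ 4 0 1 7 (by norm_num))).add (monoE _ 3 2 0 7 (by norm_num))).add (monoE _ 2 1 1 7 (by norm_num))).add (monoE _ 1 3 0 7 (by norm_num))).add (monoE _ 1 0 2 7 (by norm_num))).add (monoE _ 0 2 1 7 (by norm_num)))

private def QQ8 : MvPolynomial (Fin 3) ℚ :=
    C (120 : ℚ) * E1 ^ 5 * E2 ^ 0 * E3 ^ 1 +
    C (132 : ℚ) * E1 ^ 4 * E2 ^ 2 * E3 ^ 0 +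
    C (1116 : ℚ) * E1 ^ 3 * E2 ^ 1 * E3 ^ 1 +
    C (246 : ℚ) * E1 ^ 2 * E2 ^ 3 * E3 ^ 0 +
    C (81 : ℚ) * E1 ^ 2 * E2 ^ 0 * E3 ^ 2 +
    C (567 : ℚ) * E1 ^ 1 * E2 ^ 2 * E3 ^ 1 +
    C (36 : ℚ) * E1 ^ 0 * E2 ^ 4 * E3 ^ 0 +
    C (243 : ℚ) * E1 ^ 0 * E2 ^ 1 * E3 ^ 2

private lemma hQQ8 : (QQ8).IsHomogeneous 8 := ((((((((monoE _ 5 0 1 8 (by norm_num)).add (monoE _ 4 2 0 8 (by norm_num))).add (monoE _ 3 1 1 8 (by norm_num))).add (monoE _ 2 3 0 8 (by norm_num))).add (monoE _ 2 0 2 8 (by norm_num))).add (monoE _ 1 2 1 8 (by norm_num))).add (monoE _ 0 4 0 8 (by norm_num))).add (monoE _ 0 1 2 8 (by norm_num)))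

private def QQ9 : MvPolynomial (Fin 3) ℚ :=
    C (360 : ℚ) * E1 ^ 4 * E2 ^ 1 * E3 ^ 1 +
    C (72 : ℚ) * E1 ^ 3 * E2 ^ 3 * E3 ^ 0 +
    C (108 : ℚ) * E1 ^ 3 * E2 ^ 0 * E3 ^ 2 +
    C (540 : ℚ) * E1 ^ 2 * E2 ^ 2 * E3 ^ 1 +
    C (36 : ℚ) * E1 ^ 1 * E2 ^ 4 * E3 ^ 0 +
    C (-(243 : ℚ)) * E1 ^ 1 * E2 ^ 1 * E3 ^ 2 +
    C (108 : ℚ) * E1 ^ 0 * E2 ^ 3 * E3 ^ 1 +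
    C (729 : ℚ) * E1 ^ 0 * E2 ^ 0 * E3 ^ 3

private lemma hQQ9 : (QQ9).IsHomogeneous 9 := ((((((((monoE _ 4 1 1 9 (by norm_num)).add (monoE _ 3 3 0 9 (by norm_num))).add (monoE _ 3 0 2 9 (by norm_num))).add (monoE _ 2 2 1 9 (by norm_num))).add (monoE _ 1 4 0 9 (by norm_num))).add (monoE _ 1 1 2 9 (by norm_num))).add (monoE _ 0 3 1 9 (by norm_num))).add (monoE _ 0 0 3 9 (by norm_num)))

private def QQ10 : MvPolynomial (Fin 3) ℚ :=
    C (108 : ℚ) * E1 ^ 4 * E2 ^ 0 * E3 ^ 2 +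
    C (216 : ℚ) * E1 ^ 3 * E2 ^ 2 * E3 ^ 1 +
    C (-(486 : ℚ)) * E1 ^ 2 * E2 ^ 1 * E3 ^ 2 +
    C (108 : ℚ) * E1 ^ 1 * E2 ^ 3 * E3 ^ 1 +
    C (729 : ℚ) * E1 ^ 1 * E2 ^ 0 * E3 ^ 3

private lemma hQQ10 : (QQ10).IsHomogeneous 10 := (((((monoE _ 4 0 2 10 (by norm_num)).add (monoE _ 3 2 1 10 (by norm_num))).add (monoE _ 2 1 2 10 (by norm_num))).add (monoE _ 1 3 1 10 (by norm_num))).add (monoE _ 1 0 3 10 (by norm_num)))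

private lemma Qsplit : Qprod = QQ0 + QQ1 + QQ2 + QQ3 + QQ4 + QQ5 + QQ6 + QQ7 + QQ8 + QQ9 + QQ10 := by
  have hf : (Finset.univ.filter (fun p : Fin 3 × Fin 3 => p.1 ≠ p.2)) =
      ({((0 : Fin 3), (1 : Fin 3)), (0, 2), (1, 0), (1, 2), (2, 0), (2, 1)} :
        Finset (Fin 3 × Fin 3)) := by decide
  unfold Qprod QQ0 QQ1 QQ2 QQ3 QQ4 QQ5 QQ6 QQ7 QQ8 QQ9 QQ10 E1 E2 E3
  rw [hf]
  rw [Finset.prod_insert (by decide), Finset.prod_insert (by decide),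
    Finset.prod_insert (by decide), Finset.prod_insert (by decide),
    Finset.prod_insert (by decide), Finset.prod_singleton]
  simp only [map_ofNat, map_one, map_neg]
  ring

private lemma P9val : P9 = QQ9 := by
  have h0 := homogeneousComponent_of_mem (m := 9) ((mem_homogeneousSubmodule _ _).mpr hQQ0)
  have h1 := homogeneousComponent_of_mem (m := 9) ((mem_homogeneousSubmodule _ _).mpr hQQ1)
  have h2 := homogeneousComponent_of_mem (m := 9) ((mem_homogeneousSubmodule _ _).mpr hQQ2)
  have h3 := homogeneousComponent_of_mem (m := 9) ((mem_homogeneousSubmodule _ _).mpr hQQ3)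
  have h4 := homogeneousComponent_of_mem (m := 9) ((mem_homogeneousSubmodule _ _).mpr hQQ4)
  have h5 := homogeneousComponent_of_mem (m := 9) ((mem_homogeneousSubmodule _ _).mpr hQQ5)
  have h6 := homogeneousComponent_of_mem (m := 9) ((mem_homogeneousSubmodule _ _).mpr hQQ6)
  have h7 := homogeneousComponent_of_mem (m := 9) ((mem_homogeneousSubmodule _ _).mpr hQQ7)
  have h8 := homogeneousComponent_of_mem (m := 9) ((mem_homogeneousSubmodule _ _).mpr hQQ8)
  have h9 := homogeneousComponent_of_mem (m := 9) ((mem_homogeneousSubmodule _ _).mpr hQQ9)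
  have h10 := homogeneousComponent_of_mem (m := 9) ((mem_homogeneousSubmodule _ _).mpr hQQ10)
  rw [P9, Qsplit]
  simp only [map_add, h0, h1, h2, h3, h4, h5, h6, h7, h8, h9, h10]
  norm_num

private def Apoly : MvPolynomial (Fin 3) ℚ :=
    C (-(1836 : ℚ)) * E1 ^ 5 * E2 ^ 0 * E3 ^ 0 +
    C (9360 : ℚ) * E1 ^ 3 * E2 ^ 1 * E3 ^ 0 +
    C (-(11961 : ℚ)) * E1 ^ 2 * E2 ^ 0 * E3 ^ 1 +
    C (-(2799 : ℚ)) * E1 ^ 1 * E2 ^ 2 * E3 ^ 0 +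
    C (1323 : ℚ) * E1 ^ 0 * E2 ^ 1 * E3 ^ 1

private def Bpoly : MvPolynomial (Fin 3) ℚ :=
    C (-(8685 : ℚ)) * E1 ^ 2 * E2 ^ 1 * E3 ^ 0 +
    C (10962 : ℚ) * E1 ^ 1 * E2 ^ 0 * E3 ^ 1 +
    C (1944 : ℚ) * E1 ^ 0 * E2 ^ 2 * E3 ^ 0

private def Cpoly : MvPolynomial (Fin 3) ℚ :=
    C (1836 : ℚ) * E1 ^ 3 * E2 ^ 0 * E3 ^ 0 +
    C (2997 : ℚ) * E1 ^ 1 * E2 ^ 1 * E3 ^ 0 +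
    C (-(2673 : ℚ)) * E1 ^ 0 * E2 ^ 0 * E3 ^ 1

private lemma keyEq : P9 - 3402 * (X 0 * X 1 * X 2) ^ 3 =
    Apoly * hsym 4 + Bpoly * hsym 5 + Cpoly * hsym 6 := by
  rw [P9val]
  unfold QQ9 Apoly Bpoly Cpoly E1 E2 E3 hsym
  norm_num [Finset.sum_range_succ, map_ofNat, map_one, map_neg]
  ring

/-- `P₉ − 3402·(x₁x₂x₃)³` lies in the ideal generated by `h₄, h₅, h₆`:
the degree of the divisor `C₈` of cubic fourfolds containing a plane is 3402. -/
theorem P9_sub_point_class_mem_ideal :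
    P9 - 3402 * (X 0 * X 1 * X 2) ^ 3 ∈ Ideal.span {hsym 4, hsym 5, hsym 6} := by
  rw [keyEq]
  exact add_mem (add_mem
      (Ideal.mul_mem_left _ _ (Ideal.subset_span (by simp)))
      (Ideal.mul_mem_left _ _ (Ideal.subset_span (by simp))))
    (Ideal.mul_mem_left _ _ (Ideal.subset_span (by simp)))
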